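/- Let k be an algebraically closed field of characteristic zero and let p, q ∈ k[t] be polynomials with r, s ≥ 2 integers such that p^r + q^s = 1 and p, q are nonconstant. Then no such p, q exist; equivalently, a nonconstant polynomial f ∈ k[t] cannot have two distinct multiple fibers (fibers f^*(c) all of whose roots have multiplicity divisible by some d > 1). -/

import Mathlib

open Polynomial UniqueFactorizationMonoid UniqueFactorizationDomain

lemma aux_flt_poly {k : Type*} [Field k] [CharZero k] (p q : Polynomial k) (r s : ℕ)
    (hr : 2 ≤ r) (hs : 2 ≤ s) (hp : 0 < p.natDegree) (hq : 0 < q.natDegree)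
    (h : p ^ r + q ^ s = 1) : False := by
  classical
  have hp0 : p ≠ 0 := fun h0 => by simp [h0] at hp
  have hq0 : q ≠ 0 := fun h0 => by simp [h0] at hq
  have ha : p ^ r ≠ 0 := pow_ne_zero _ hp0
  have hb : q ^ s ≠ 0 := pow_ne_zero _ hq0
  have hc : (-1 : Polynomial k) ≠ 0 := by norm_num
  have hab : IsCoprime (p ^ r) (q ^ s) := ⟨1, 1, by linear_combination h⟩
  have hbc : IsCoprime (q ^ s) (-1 : Polynomial k) := (isCoprime_one_right).neg_right
  have hca : IsCoprime (-1 : Polynomial k) (p ^ r) := (isCoprime_one_left).neg_left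
  have hsum : p ^ r + q ^ s + (-1) = 0 := by rw [h]; ring
  rcases Polynomial.abc ha hb hc hab hsum with ⟨h1, h2, _⟩ | ⟨h1, _, _⟩
  · have hrad : radical (p ^ r * q ^ s * (-1)) = radical p * radical q := by
      rw [mul_neg_one, radical_neg, radical_mul hab.isRelPrime, radical_pow p (by omega),
        radical_pow q (by omega)]
    have hdeg : (radical (p ^ r * q ^ s * (-1))).natDegree ≤ p.natDegree + q.natDegree := by
      rw [hrad, natDegree_mul (radical_ne_zero (a := p)) (radical_ne_zero (a := q))]
      exact Nat.add_le_add (natDegree_le_of_dvd (radical_dvd_self (a := p)) hp0)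
        (natDegree_le_of_dvd (radical_dvd_self (a := q)) hq0)
    rw [natDegree_pow] at h1 h2
    have b1 : r * p.natDegree + 1 ≤ p.natDegree + q.natDegree := le_trans h1 hdeg
    have b2 : s * q.natDegree + 1 ≤ p.natDegree + q.natDegree := le_trans h2 hdeg
    nlinarith
  · have := Polynomial.natDegree_eq_zero_of_derivative_eq_zero h1
    rw [natDegree_pow] at this
    nlinarith

theorem stmt_0 (k : Type*) [Field k] [IsAlgClosed k] [CharZero k] :
    (∀ (p q : Polynomial k) (r s : ℕ), 2 ≤ r → 2 ≤ s →
      0 < p.natDegree → 0 < q.natDegree → p ^ r + q ^ s = 1 → False) ∧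
    (∀ f : Polynomial k, 0 < f.natDegree →
      ∀ (c₁ c₂ : k) (d₁ d₂ : ℕ), 2 ≤ d₁ → 2 ≤ d₂ →
        (∃ g : Polynomial k, f - Polynomial.C c₁ = g ^ d₁) →
        (∃ g : Polynomial k, f - Polynomial.C c₂ = g ^ d₂) → c₁ = c₂) := by
  constructor
  · exact fun p q r s hr hs hp hq h => aux_flt_poly p q r s hr hs hp hq h
  · intro f hf c₁ c₂ d₁ d₂ hd₁ hd₂ ⟨g₁, h1⟩ ⟨g₂, h2⟩
    by_contra hne
    set e : k := c₂ - c₁ with he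
    have he0 : e ≠ 0 := sub_ne_zero.mpr (Ne.symm hne)
    obtain ⟨α, hα⟩ := IsAlgClosed.exists_pow_nat_eq (k := k) e⁻¹ (n := d₁) (by omega)
    obtain ⟨β, hβ⟩ := IsAlgClosed.exists_pow_nat_eq (k := k) (-e⁻¹) (n := d₂) (by omega)
    have hα0 : α ≠ 0 := by
      have hne' : α ^ d₁ ≠ 0 := hα ▸ inv_ne_zero he0
      exact fun h0 => hne' (by rw [h0, zero_pow (by omega : d₁ ≠ 0)])
    have hβ0 : β ≠ 0 := by
      have hne' : β ^ d₂ ≠ 0 := hβ ▸ neg_ne_zero.mpr (inv_ne_zero he0)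
      exact fun h0 => hne' (by rw [h0, zero_pow (by omega : d₂ ≠ 0)])
    -- degrees
    have hg₁ : 0 < g₁.natDegree := by
      have : d₁ * g₁.natDegree = f.natDegree := by
        rw [← natDegree_pow, ← h1, natDegree_sub_C]
      nlinarith
    have hg₂ : 0 < g₂.natDegree := by
      have : d₂ * g₂.natDegree = f.natDegree := by
        rw [← natDegree_pow, ← h2, natDegree_sub_C]
      nlinarith
    have hP : 0 < (Polynomial.C α * g₁).natDegree := by
      rwa [natDegree_C_mul hα0]
    have hQ : 0 < (Polynomial.C β * g₂).natDegree := by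
      rwa [natDegree_C_mul hβ0]
    have key : (Polynomial.C α * g₁) ^ d₁ + (Polynomial.C β * g₂) ^ d₂ = 1 := by
      rw [mul_pow, mul_pow, ← Polynomial.C_pow, ← Polynomial.C_pow, hα, hβ, ← h1, ← h2]
      rw [map_neg]
      have : (Polynomial.C e⁻¹) * (Polynomial.C e) = 1 := by
        rw [← Polynomial.C_mul, inv_mul_cancel₀ he0, Polynomial.C_1]
      calc Polynomial.C e⁻¹ * (f - Polynomial.C c₁) +
            -Polynomial.C e⁻¹ * (f - Polynomial.C c₂)
          = Polynomial.C e⁻¹ * (Polynomial.C c₂ - Polynomial.C c₁) := by ring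
        _ = Polynomial.C e⁻¹ * Polynomial.C e := by rw [← Polynomial.C_sub]
        _ = 1 := this
    exact aux_flt_poly _ _ d₁ d₂ hd₁ hd₂ hP hQ key
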